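/- Worst-case corner-point bound: Let K and N be positive integers with N̄ := min(K,N) ≥ 2, let ℓ ∈ {1,…,N̄−1}, and set M_ℓ := (N−ℓ)/(ℓ+1). Then ((N − M_ℓ)/M_ℓ)·(1 − (1 − M_ℓ/N)^{N̄}) ≤ φ(ℓ/N, ℓ) · ∑_{j=1}^{ℓ} (1 − j·M_ℓ/(N−j+1)). -/

import Mathlib

/-- The function `φ(a,ℓ)` from Theorem 2 of the paper. -/
noncomputable def phi (a : ℝ) (ℓ : ℕ) : ℝ :=
  ((a * ((ℓ : ℝ) + 1) / ((1 - a) * (ℓ : ℝ))) *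
      (1 - (((ℓ : ℝ) + a) / ((ℓ : ℝ) + 1)) ^ ((ℓ : ℝ) / a))) /
    (1 - (1 - a) * ∑ j ∈ Finset.range ℓ, 1 / ((ℓ : ℝ) - a * (j : ℝ)))

set_option maxHeartbeats 1000000 in
theorem worst_case_corner_point (K N : ℕ) (hKN : 2 ≤ min K N)
    (ℓ : ℕ) (hℓ1 : 1 ≤ ℓ) (hℓ2 : ℓ ≤ min K N - 1)
    (M : ℝ) (hMdef : M = ((N : ℝ) - (ℓ : ℝ)) / ((ℓ : ℝ) + 1)) :
    ((N : ℝ) - M) / M * (1 - (1 - M / (N : ℝ)) ^ min K N) ≤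
      phi ((ℓ : ℝ) / (N : ℝ)) ℓ *
        ∑ j ∈ Finset.Icc 1 ℓ, (1 - (j : ℝ) * M / ((N : ℝ) - (j : ℝ) + 1)) := by
  subst hMdef
  have hminN : min K N ≤ N := min_le_right K N
  have hℓN : ℓ + 1 ≤ N := by omega
  set n : ℝ := (N : ℝ) with hn
  set l : ℝ := (ℓ : ℝ) with hl
  have hl1 : (1 : ℝ) ≤ l := by rw [hl]; exact_mod_cast hℓ1
  have hln : l + 1 ≤ n := by rw [hl, hn]; exact_mod_cast hℓN
  have hl0 : 0 < l := by linarith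
  have hn0 : 0 < n := by linarith
  have hnl : 0 < n - l := by linarith
  set a : ℝ := l / n with ha
  have ha0 : 0 < a := div_pos hl0 hn0
  have ha1 : a < 1 := (div_lt_one hn0).mpr (by linarith)
  have hjlt : ∀ j ∈ Finset.range ℓ, (j : ℝ) < l := by
    intro j hj
    rw [hl]; exact_mod_cast Finset.mem_range.mp hj
  have hden : ∀ j ∈ Finset.range ℓ, 0 < l - a * (j : ℝ) := by
    intro j hj
    have hjl := hjlt j hj
    have : a * (j : ℝ) ≤ (j : ℝ) := by nlinarith [Nat.cast_nonneg (α := ℝ) j]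
    linarith
  -- the converse-bound denominator D
  set T : ℝ := ∑ j ∈ Finset.range ℓ, 1 / (l - a * (j : ℝ)) with hT
  have hD : (1 - a) * T < 1 := by
    have h2 : (1 - a) * T < ∑ _j ∈ Finset.range ℓ, 1 / l := by
      rw [hT, Finset.mul_sum]
      apply Finset.sum_lt_sum_of_nonempty
      · exact Finset.nonempty_range_iff.mpr (by omega)
      · intro j hj
        have hjl := hjlt j hj
        have h1 := hden j hj
        rw [mul_one_div, div_lt_div_iff₀ h1 hl0]
        have hj0 : (0:ℝ) ≤ (j:ℝ) := Nat.cast_nonneg j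
        nlinarith
    have h3 : ∑ _j ∈ Finset.range ℓ, 1 / l = 1 := by
      rw [Finset.sum_const, Finset.card_range, nsmul_eq_mul, ← hl, mul_one_div,
        div_self (ne_of_gt hl0)]
    linarith [h3 ▸ h2]
  have hD0 : (0:ℝ) < 1 - (1 - a) * T := by linarith
  -- key identity : S = (l*(n+1)/(l+1)) * (1 - (1-a)*T)
  have hS : ∑ j ∈ Finset.Icc 1 ℓ, (1 - (j : ℝ) * ((n - l) / (l + 1)) / (n - (j : ℝ) + 1))
      = (l * (n + 1) / (l + 1)) * (1 - (1 - a) * T) := by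
    rw [← Finset.Ico_add_one_right_eq_Icc, Finset.sum_Ico_eq_sum_range]
    have hsimp : ℓ + 1 - 1 = ℓ := by omega
    rw [hsimp]
    have hterm : ∀ j ∈ Finset.range ℓ,
        (1 - ((1 + j : ℕ) : ℝ) * ((n - l) / (l + 1)) / (n - ((1 + j : ℕ) : ℝ) + 1))
        = (n + 1) / (l + 1) - (l * (n + 1) / (l + 1) * (1 - a)) * (1 / (l - a * (j : ℝ))) := by
      intro j hj
      have hjl := hjlt j hj
      have h1 := hden j hj
      have hc : ((1 + j : ℕ) : ℝ) = 1 + (j : ℝ) := by push_cast; ring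
      rw [hc, show n - (1 + (j:ℝ)) + 1 = n - (j:ℝ) from by ring]
      have hnj0 : n - (j : ℝ) ≠ 0 := by
        have : l ≤ n := by linarith
        intro h; nlinarith
      have hl1' : l + 1 ≠ 0 := by positivity
      have hn0' : n ≠ 0 := ne_of_gt hn0
      have hl0' : l ≠ 0 := ne_of_gt hl0
      have hrw : 1 / (l - a * (j:ℝ)) = n / (l * (n - (j:ℝ))) := by
        rw [ha, show l - l / n * (j:ℝ) = l * (n - (j:ℝ)) / n from by field_simp,
          one_div_div]
      rw [hrw, ha]
      field_simp
      ring
    rw [Finset.sum_congr rfl hterm, Finset.sum_sub_distrib, Finset.sum_const,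
      Finset.card_range, ← Finset.mul_sum, ← hT, nsmul_eq_mul, ← hl]
    ring
  rw [hS]
  -- simplify phi at a = l/n
  have hexp : l / a = n := by
    rw [ha]
    field_simp
  have hbase : (l + a) / (l + 1) = 1 - (n - l) / (l + 1) / n := by
    rw [ha]
    have hl1' : l + 1 ≠ 0 := by positivity
    have hn0' : n ≠ 0 := ne_of_gt hn0
    field_simp
    ring
  have hpow : ((l + a) / (l + 1)) ^ (l / a) = (1 - (n - l) / (l + 1) / n) ^ N := by
    rw [hbase, hexp, hn, Real.rpow_natCast]
  rw [phi, hpow, ← hT]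
  -- cancel D
  have habs : ∀ X C D : ℝ, D ≠ 0 → X / D * (C * D) = X * C := by
    intro X C D hD'
    field_simp
  rw [habs _ _ _ (ne_of_gt hD0)]
  have hPC : a * (l + 1) / ((1 - a) * l) * (1 - (1 - (n - l) / (l + 1) / n) ^ N)
        * (l * (n + 1) / (l + 1))
      = (l * (n + 1) / (n - l)) * (1 - (1 - (n - l) / (l + 1) / n) ^ N) := by
    have h1a : (1:ℝ) - l / n ≠ 0 := by rw [← ha]; linarith
    have hnl' : n - l ≠ 0 := ne_of_gt hnl
    have hl1' : l + 1 ≠ 0 := by positivity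
    have hn0' : n ≠ 0 := ne_of_gt hn0
    have hl0' : l ≠ 0 := ne_of_gt hl0
    rw [ha]
    field_simp
  rw [hPC]
  -- LHS prefactor equals the same
  have hpre : (n - (n - l) / (l + 1)) / ((n - l) / (l + 1)) = l * (n + 1) / (n - l) := by
    have hnl' : n - l ≠ 0 := ne_of_gt hnl
    have hl1' : l + 1 ≠ 0 := by positivity
    field_simp
    ring
  rw [hpre]
  -- compare powers
  have hq0 : (0:ℝ) ≤ 1 - (n - l) / (l + 1) / n := by rw [← hbase]; positivity
  have hq1 : 1 - (n - l) / (l + 1) / n ≤ 1 := by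
    have : (0:ℝ) ≤ (n - l) / (l + 1) / n := by positivity
    linarith
  have hmono : (1 - (n - l) / (l + 1) / n) ^ N ≤ (1 - (n - l) / (l + 1) / n) ^ (min K N) :=
    pow_le_pow_of_le_one hq0 hq1 hminN
  have hfac : 0 ≤ l * (n + 1) / (n - l) := by positivity
  nlinarith [hmono, hfac]
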